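/- Let v ∈ ℝ^S be monotone nonincreasing (v₁ ≥ v₂ ≥ … ≥ v_S), let p̄ ∈ Δ^S, and let ψ ≥ 0. Then the minimum of ⟨v, p⟩ over the L1 ball intersected with the simplex, { p ∈ Δ^S : ‖p − p̄‖₁ ≤ ψ }, equals the minimum of ⟨v, p⟩ over the relaxed set { p ∈ Δ^S : for every k ∈ {1,…,S+1}, ∑_{j ≥ k} (p_j − p̄_j) − ∑_{j < k} (p_j − p̄_j) ≤ ψ }. (Lemma B.5: for monotone value functions, the exponential family of L1 constraints can be replaced by S+1 linear constraints without changing the optimal robust value.) -/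

import Mathlib

noncomputable section

private lemma abel_aux (w U : ℕ → ℝ) (hw : ∀ i, w (i+1) ≤ w i) (hU : ∀ k, 0 ≤ U k) :
    ∀ n, ∑ j ∈ Finset.range n, w j * (U j - U (j+1)) + w n * U n ≤ w 0 * U 0 := by
  intro n
  induction n with
  | zero => simp
  | succ n ih =>
    rw [Finset.sum_range_succ]
    nlinarith [hU (n+1), hw n]

private lemma filter_split {S : ℕ} (d : Fin S → ℝ) (k : ℕ) :
    (∑ j ∈ Finset.univ.filter (fun j : Fin S => k ≤ (j : ℕ)), d j) +
    (∑ j ∈ Finset.univ.filter (fun j : Fin S => (j : ℕ) < k), d j) = ∑ j, d j := by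
  rw [show (Finset.univ.filter fun j : Fin S => (j : ℕ) < k) =
      Finset.univ.filter (fun j : Fin S => ¬ (k ≤ (j : ℕ))) from by
    ext j; simp [Nat.not_le]]
  exact Finset.sum_filter_add_sum_filter_not _ _ _

private lemma filter_step_ge {S : ℕ} (d : Fin S → ℝ) (k : ℕ) (hk : k < S) :
    (∑ j ∈ Finset.univ.filter (fun j : Fin S => k ≤ (j : ℕ)), d j) =
    d ⟨k, hk⟩ + ∑ j ∈ Finset.univ.filter (fun j : Fin S => k + 1 ≤ (j : ℕ)), d j := by
  have he : (Finset.univ.filter fun j : Fin S => k ≤ (j : ℕ)) =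
      insert (⟨k, hk⟩ : Fin S) (Finset.univ.filter fun j : Fin S => k + 1 ≤ (j : ℕ)) := by
    ext j
    simp only [Finset.mem_filter, Finset.mem_insert, Finset.mem_univ, true_and, Fin.ext_iff]
    omega
  have hnm : (⟨k, hk⟩ : Fin S) ∉ (Finset.univ.filter fun j : Fin S => k + 1 ≤ (j : ℕ)) := by
    simp
  rw [he, Finset.sum_insert hnm]

private lemma filter_step_lt {S : ℕ} (d : Fin S → ℝ) (k : ℕ) (hk : k < S) :
    (∑ j ∈ Finset.univ.filter (fun j : Fin S => (j : ℕ) < k + 1), d j) =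
    d ⟨k, hk⟩ + ∑ j ∈ Finset.univ.filter (fun j : Fin S => (j : ℕ) < k), d j := by
  have he : (Finset.univ.filter fun j : Fin S => (j : ℕ) < k + 1) =
      insert (⟨k, hk⟩ : Fin S) (Finset.univ.filter fun j : Fin S => (j : ℕ) < k) := by
    ext j
    simp only [Finset.mem_filter, Finset.mem_insert, Finset.mem_univ, true_and, Fin.ext_iff]
    omega
  have hnm : (⟨k, hk⟩ : Fin S) ∉ (Finset.univ.filter fun j : Fin S => (j : ℕ) < k) := by
    simp
  rw [he, Finset.sum_insert hnm]

private lemma filter_ge_empty {S : ℕ} (d : Fin S → ℝ) (k : ℕ) (hk : S ≤ k) :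
    (∑ j ∈ Finset.univ.filter (fun j : Fin S => k ≤ (j : ℕ)), d j) = 0 := by
  have : (Finset.univ.filter fun j : Fin S => k ≤ (j : ℕ)) = ∅ := by
    ext j
    simp only [Finset.mem_filter, Finset.mem_univ, true_and, Finset.notMem_empty, iff_false]
    omega
  rw [this, Finset.sum_empty]

/-- tail sums of `p - pbar` -/
private def tsumB5 {S : ℕ} (p pbar : Fin S → ℝ) (k : ℕ) : ℝ :=
  ∑ j ∈ Finset.univ.filter (fun j : Fin S => k ≤ (j : ℕ)), (p j - pbar j)

/-- cumulative sums of `pbar` -/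
private def csumB5 {S : ℕ} (pbar : Fin S → ℝ) (k : ℕ) : ℝ :=
  ∑ j ∈ Finset.univ.filter (fun j : Fin S => (j : ℕ) < k), pbar j

/-- capped tail sums -/
private def sfunB5 {S : ℕ} (pbar : Fin S → ℝ) (ψ : ℝ) (k : ℕ) : ℝ :=
  if k < S then min (ψ/2) (csumB5 pbar k) else 0

private lemma exists_good {S : ℕ} (hS : 0 < S)
    (v : Fin S → ℝ) (hv : ∀ i j : Fin S, i ≤ j → v j ≤ v i)
    (pbar : Fin S → ℝ) (hpbar : pbar ∈ stdSimplex ℝ (Fin S))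
    (ψ : ℝ) (hψ : 0 ≤ ψ)
    (p : Fin S → ℝ) (hp : p ∈ stdSimplex ℝ (Fin S))
    (hcons : ∀ k : Fin (S + 1),
      (∑ j ∈ Finset.univ.filter (fun j : Fin S => (k : ℕ) ≤ (j : ℕ)), (p j - pbar j)) -
      (∑ j ∈ Finset.univ.filter (fun j : Fin S => (j : ℕ) < (k : ℕ)), (p j - pbar j)) ≤ ψ) :
    ∃ q, q ∈ stdSimplex ℝ (Fin S) ∧ (∑ j, |q j - pbar j|) ≤ ψ ∧
      ∑ j, v j * q j ≤ ∑ j, v j * p j := by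
  classical
  set T : ℕ → ℝ := tsumB5 p pbar with hT
  set C : ℕ → ℝ := csumB5 pbar with hC
  set Sf : ℕ → ℝ := sfunB5 pbar ψ with hSf
  have hSfdef : ∀ k, Sf k = if k < S then min (ψ/2) (C k) else 0 := fun k => rfl
  set q : Fin S → ℝ := fun j => pbar j + (Sf j - Sf (j + 1)) with hq
  have hsum : ∑ j, (p j - pbar j) = 0 := by
    rw [Finset.sum_sub_distrib, hp.2, hpbar.2]; ring
  have hTsplit : ∀ k : ℕ,
      T k + ∑ j ∈ Finset.univ.filter (fun j : Fin S => (j : ℕ) < k), (p j - pbar j) = 0 := by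
    intro k
    rw [show T k = ∑ j ∈ Finset.univ.filter (fun j : Fin S => k ≤ (j : ℕ)), (p j - pbar j)
      from rfl]
    rw [filter_split, hsum]
  have hTle : ∀ k, k ≤ S → T k ≤ ψ / 2 := by
    intro k hk
    have h1 : T k -
        (∑ j ∈ Finset.univ.filter (fun j : Fin S => (j : ℕ) < k), (p j - pbar j)) ≤ ψ :=
      hcons ⟨k, by omega⟩
    have h2 := hTsplit k
    linarith
  have hTS : ∀ k, S ≤ k → T k = 0 := fun k hk => filter_ge_empty _ k hk
  have hT0 : T 0 = 0 := by
    have := hTsplit 0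
    have h2 : (Finset.univ.filter fun j : Fin S => (j : ℕ) < 0) = ∅ := by
      ext j; simp
    rw [h2, Finset.sum_empty] at this
    linarith
  have hTC : ∀ k, T k ≤ C k := by
    intro k
    have h1 := hTsplit k
    have h2 : 0 ≤ ∑ j ∈ Finset.univ.filter (fun j : Fin S => (j : ℕ) < k), p j :=
      Finset.sum_nonneg fun j _ => hp.1 j
    have h3 : ∑ j ∈ Finset.univ.filter (fun j : Fin S => (j : ℕ) < k), p j =
        C k + ∑ j ∈ Finset.univ.filter (fun j : Fin S => (j : ℕ) < k), (p j - pbar j) := by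
      rw [show C k = ∑ j ∈ Finset.univ.filter (fun j : Fin S => (j : ℕ) < k), pbar j from rfl,
        ← Finset.sum_add_distrib]
      exact Finset.sum_congr rfl fun j _ => by ring
    linarith
  have hCstep : ∀ k, ∀ hk : k < S, C (k + 1) = C k + pbar ⟨k, hk⟩ := by
    intro k hk
    rw [show C (k+1) = ∑ j ∈ Finset.univ.filter (fun j : Fin S => (j : ℕ) < k + 1), pbar j
      from rfl, filter_step_lt pbar k hk]
    ring_nf
    rfl
  have hTstep : ∀ k, ∀ hk : k < S, T k - T (k + 1) = p ⟨k, hk⟩ - pbar ⟨k, hk⟩ := by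
    intro k hk
    rw [show T k = ∑ j ∈ Finset.univ.filter (fun j : Fin S => k ≤ (j : ℕ)), (p j - pbar j)
      from rfl, filter_step_ge _ k hk]
    rw [show T (k+1) = ∑ j ∈ Finset.univ.filter (fun j : Fin S => k + 1 ≤ (j : ℕ)),
      (p j - pbar j) from rfl]
    ring
  have hCnonneg : ∀ k, 0 ≤ C k := fun k => Finset.sum_nonneg fun j _ => hpbar.1 j
  have hCmono : ∀ k k', k ≤ k' → C k ≤ C k' := by
    intro k k' hkk
    apply Finset.sum_le_sum_of_subset_of_nonneg
    · intro j hj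
      simp only [Finset.mem_filter, Finset.mem_univ, true_and] at hj ⊢
      omega
    · intro j _ _; exact hpbar.1 j
  have hC0 : C 0 = 0 := by
    rw [show C 0 = ∑ j ∈ Finset.univ.filter (fun j : Fin S => (j : ℕ) < 0), pbar j from rfl]
    have : (Finset.univ.filter fun j : Fin S => (j : ℕ) < 0) = ∅ := by
      ext j; simp
    rw [this, Finset.sum_empty]
  have hSf0 : Sf 0 = 0 := by
    rw [hSfdef 0, if_pos hS, hC0]
    exact min_eq_right (by linarith)
  have hSfS : ∀ k, S ≤ k → Sf k = 0 := by
    intro k hk; rw [hSfdef k, if_neg (Nat.not_lt.mpr hk)]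
  have hSfnonneg : ∀ k, 0 ≤ Sf k := by
    intro k
    rw [hSfdef k]
    split
    · exact le_min (by linarith) (hCnonneg k)
    · exact le_refl 0
  have hSfle : ∀ k, Sf k ≤ ψ / 2 := by
    intro k
    rw [hSfdef k]
    split
    · exact min_le_left _ _
    · linarith
  have hSfmono : ∀ k k', k ≤ k' → k' < S → Sf k ≤ Sf k' := by
    intro k k' hkk hk'
    rw [hSfdef k, hSfdef k', if_pos hk', if_pos (lt_of_le_of_lt hkk hk')]
    exact min_le_min (le_refl _) (hCmono k k' hkk)
  have hUnonneg : ∀ k, 0 ≤ Sf k - T k := by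
    intro k
    rcases Nat.lt_or_ge k S with h | h
    · rw [hSfdef k, if_pos h]
      have := le_min (hTle k (le_of_lt h)) (hTC k)
      linarith
    · rw [hSfS k h, hTS k h]; linarith
  have hqsimplex : q ∈ stdSimplex ℝ (Fin S) := by
    constructor
    · intro j
      have hk : (j : ℕ) < S := j.isLt
      have hje : (⟨(j : ℕ), hk⟩ : Fin S) = j := Fin.eta j hk
      show 0 ≤ pbar j + (Sf (j : ℕ) - Sf ((j : ℕ) + 1))
      rcases Nat.lt_or_ge ((j : ℕ) + 1) S with h | h
      · have h1 : Sf ((j : ℕ) + 1) ≤ Sf (j : ℕ) + pbar j := by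
          rw [hSfdef ((j : ℕ) + 1), hSfdef (j : ℕ), if_pos h, if_pos hk]
          rw [hCstep (j : ℕ) hk, hje]
          rcases le_total (ψ / 2) (C (j : ℕ)) with h2 | h2
          · rw [min_eq_left h2]
            exact le_trans (min_le_left _ _) (by linarith [hpbar.1 j])
          · rw [min_eq_right h2]
            exact min_le_right _ _
        linarith
      · rw [hSfS _ h]
        have := hSfnonneg (j : ℕ)
        have := hpbar.1 j
        linarith
    · have h1 : ∑ j : Fin S, q j = ∑ j : Fin S, pbar j +
          ∑ j : Fin S, (Sf (j : ℕ) - Sf ((j : ℕ) + 1)) := by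
        rw [← Finset.sum_add_distrib]
      have h2 : ∑ j : Fin S, (Sf (j : ℕ) - Sf ((j : ℕ) + 1)) =
          ∑ j ∈ Finset.range S, (Sf j - Sf (j + 1)) :=
        Fin.sum_univ_eq_sum_range (fun n => Sf n - Sf (n + 1)) S
      rw [h1, h2, Finset.sum_range_sub' Sf S, hpbar.2, hSf0, hSfS S (le_refl S)]
      ring
  refine ⟨q, hqsimplex, ?_, ?_⟩
  · -- L1 bound
    obtain ⟨m, hm⟩ : ∃ m, S = m + 1 := ⟨S - 1, (Nat.succ_pred_eq_of_pos hS).symm⟩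
    have h1 : ∑ j : Fin S, |q j - pbar j| = ∑ j ∈ Finset.range S, |Sf j - Sf (j + 1)| := by
      rw [show (∑ j : Fin S, |q j - pbar j|) = ∑ j : Fin S, |Sf (j : ℕ) - Sf ((j : ℕ) + 1)| from
        Finset.sum_congr rfl fun j _ => by rw [show q j - pbar j = Sf (j:ℕ) - Sf ((j:ℕ)+1) from by
          show pbar j + (Sf (j:ℕ) - Sf ((j:ℕ)+1)) - pbar j = _; ring]]
      exact Fin.sum_univ_eq_sum_range (fun n => |Sf n - Sf (n + 1)|) S
    rw [h1, hm, Finset.sum_range_succ]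
    have h2 : ∑ j ∈ Finset.range m, |Sf j - Sf (j + 1)| =
        ∑ j ∈ Finset.range m, (Sf (j + 1) - Sf j) := by
      apply Finset.sum_congr rfl
      intro j hj
      have hj' : j < m := Finset.mem_range.mp hj
      rw [abs_sub_comm, abs_of_nonneg]
      have := hSfmono j (j + 1) (Nat.le_succ j) (by omega)
      linarith
    rw [h2, Finset.sum_range_sub Sf m, hSfS (m + 1) (by omega), hSf0]
    have h3 := hSfle m
    have h4 := hSfnonneg m
    rw [abs_of_nonneg (by linarith)]
    linarith
  · -- value comparison
    set w : ℕ → ℝ := fun n => if h : n < S then v ⟨n, h⟩ else v ⟨S - 1, by omega⟩ with hw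
    have hwdef : ∀ n, w n = if h : n < S then v ⟨n, h⟩ else v ⟨S - 1, by omega⟩ := fun n => rfl
    have hwm : ∀ i, w (i + 1) ≤ w i := by
      intro i
      rw [hwdef (i+1), hwdef i]
      by_cases h1 : i + 1 < S
      · rw [dif_pos h1, dif_pos (by omega : i < S)]
        exact hv _ _ (by simp [Fin.le_def])
      · rw [dif_neg h1]
        by_cases h2 : i < S
        · rw [dif_pos h2]
          exact hv ⟨i, h2⟩ ⟨S - 1, by omega⟩ (by simp [Fin.le_def]; omega)
        · rw [dif_neg h2]
    set U : ℕ → ℝ := fun k => Sf k - T k with hU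
    have hU0 : U 0 = 0 := by show Sf 0 - T 0 = 0; rw [hSf0, hT0]; ring
    have hUS : U S = 0 := by
      show Sf S - T S = 0; rw [hSfS S (le_refl S), hTS S (le_refl S)]; ring
    have habel := abel_aux w U hwm (fun k => hUnonneg k) S
    rw [hU0, hUS] at habel
    have hdiff : ∑ j : Fin S, v j * q j - ∑ j : Fin S, v j * p j =
        ∑ j ∈ Finset.range S, w j * (U j - U (j + 1)) := by
      rw [← Finset.sum_sub_distrib]
      rw [show (∑ j : Fin S, (v j * q j - v j * p j)) =
          ∑ j : Fin S, w (j : ℕ) * (U (j : ℕ) - U ((j : ℕ) + 1)) from ?_]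
      · exact Fin.sum_univ_eq_sum_range (fun n => w n * (U n - U (n + 1))) S
      · apply Finset.sum_congr rfl
        intro j _
        have hk : (j : ℕ) < S := j.isLt
        have hje : (⟨(j : ℕ), hk⟩ : Fin S) = j := Fin.eta j hk
        have hstep := hTstep (j : ℕ) hk
        rw [hje] at hstep
        have hw' : w (j : ℕ) = v j := by rw [hwdef (j : ℕ), dif_pos hk, hje]
        have hU1 : U (j : ℕ) = Sf (j : ℕ) - T (j : ℕ) := rfl
        have hU2 : U ((j : ℕ) + 1) = Sf ((j : ℕ) + 1) - T ((j : ℕ) + 1) := rfl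
        have hq' : q j = pbar j + (Sf (j : ℕ) - Sf ((j : ℕ) + 1)) := rfl
        rw [hw', hU1, hU2, hq']
        linear_combination (v j) * hstep
    nlinarith [habel, hdiff]

theorem monotone_l1_relaxation
    {S : ℕ} (v : Fin S → ℝ) (hv : ∀ i j : Fin S, i ≤ j → v j ≤ v i)
    (pbar : Fin S → ℝ) (hpbar : pbar ∈ stdSimplex ℝ (Fin S))
    (ψ : ℝ) (hψ : 0 ≤ ψ) :
    sInf ((fun p => ∑ j, v j * p j) ''
        {p ∈ stdSimplex ℝ (Fin S) | ∑ j, |p j - pbar j| ≤ ψ}) =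
    sInf ((fun p => ∑ j, v j * p j) ''
        {p ∈ stdSimplex ℝ (Fin S) | ∀ k : Fin (S + 1),
          (∑ j ∈ Finset.univ.filter (fun j : Fin S => (k : ℕ) ≤ (j : ℕ)), (p j - pbar j)) -
          (∑ j ∈ Finset.univ.filter (fun j : Fin S => (j : ℕ) < (k : ℕ)), (p j - pbar j))
            ≤ ψ}) := by
  classical
  have hS : 0 < S := by
    rcases Nat.eq_zero_or_pos S with h | h
    · exfalso
      have h2 := hpbar.2
      subst h
      simp at h2
    · exact h
  set f : (Fin S → ℝ) → ℝ := fun p => ∑ j, v j * p j with hf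
  set A : Set (Fin S → ℝ) := {p ∈ stdSimplex ℝ (Fin S) | ∑ j, |p j - pbar j| ≤ ψ} with hA
  set B : Set (Fin S → ℝ) := {p ∈ stdSimplex ℝ (Fin S) | ∀ k : Fin (S + 1),
          (∑ j ∈ Finset.univ.filter (fun j : Fin S => (k : ℕ) ≤ (j : ℕ)), (p j - pbar j)) -
          (∑ j ∈ Finset.univ.filter (fun j : Fin S => (j : ℕ) < (k : ℕ)), (p j - pbar j))
            ≤ ψ} with hB
  have hAB : A ⊆ B := by
    rintro p ⟨hps, hpl⟩
    refine ⟨hps, fun k => ?_⟩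
    have h1 : ∑ j ∈ Finset.univ.filter (fun j : Fin S => (k : ℕ) ≤ (j : ℕ)), (p j - pbar j)
        ≤ ∑ j ∈ Finset.univ.filter (fun j : Fin S => (k : ℕ) ≤ (j : ℕ)), |p j - pbar j| :=
      Finset.sum_le_sum fun j _ => le_abs_self _
    have h2 : -(∑ j ∈ Finset.univ.filter (fun j : Fin S => (j : ℕ) < (k : ℕ)), (p j - pbar j))
        ≤ ∑ j ∈ Finset.univ.filter (fun j : Fin S => (j : ℕ) < (k : ℕ)), |p j - pbar j| := by
      rw [← Finset.sum_neg_distrib]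
      exact Finset.sum_le_sum fun j _ => neg_le_abs _
    have h3 : ∑ j ∈ Finset.univ.filter (fun j : Fin S => (k : ℕ) ≤ (j : ℕ)), |p j - pbar j| +
        ∑ j ∈ Finset.univ.filter (fun j : Fin S => (j : ℕ) < (k : ℕ)), |p j - pbar j| =
        ∑ j, |p j - pbar j| := filter_split _ _
    linarith
  have hpA : pbar ∈ A := ⟨hpbar, by simp [hψ]⟩
  have hfbd : ∀ p ∈ stdSimplex ℝ (Fin S), -(∑ j, |v j|) ≤ f p := by
    intro p hps
    have hle : ∀ j : Fin S, -|v j| ≤ v j * p j := by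
      intro j
      have h1 : 0 ≤ p j := hps.1 j
      have h2 : p j ≤ 1 := by
        rw [← hps.2]
        exact Finset.single_le_sum (fun i _ => hps.1 i) (Finset.mem_univ j)
      nlinarith [neg_abs_le (v j), abs_nonneg (v j)]
    calc -(∑ j, |v j|) = ∑ j : Fin S, -|v j| := by rw [Finset.sum_neg_distrib]
      _ ≤ ∑ j, v j * p j := Finset.sum_le_sum fun j _ => hle j
  have hbddB : BddBelow (f '' B) := by
    refine ⟨-(∑ j, |v j|), ?_⟩
    rintro y ⟨p, hp, rfl⟩
    exact hfbd p hp.1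
  have hbddA : BddBelow (f '' A) := hbddB.mono (Set.image_mono hAB)
  have hAne : (f '' A).Nonempty := ⟨f pbar, pbar, hpA, rfl⟩
  have hBne : (f '' B).Nonempty := ⟨f pbar, pbar, hAB hpA, rfl⟩
  apply le_antisymm
  · apply le_csInf hBne
    rintro y ⟨p, hp, rfl⟩
    obtain ⟨q, hq1, hq2, hq3⟩ := exists_good hS v hv pbar hpbar ψ hψ p hp.1 hp.2
    exact le_trans (csInf_le hbddA ⟨q, ⟨hq1, hq2⟩, rfl⟩) hq3
  · exact csInf_le_csInf hbddB hAne (Set.image_mono hAB)
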